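/- arXiv:2505.00669 — 3 statements merged into one kernel-verified Lean document; each statement's English description precedes it below -/
import Mathlib

section
/- Let J_{n-1} be a real invertible symmetric persymmetric matrix, u ∈ ℝⁿ, v the reversal of u, Δ := 1 − uᵀ J_{n-1}⁻¹ u ≠ 0, D := uᵀ J_{n-1}⁻¹ v. Then for every scalar c, the quadratic expression 1 − (c, vᵀ) J_n⁻¹ (c, vᵀ)ᵀ factors as (−Δ⁻¹ c + 1 + Δ⁻¹ D)·(c + Δ − D), where J_n = [[1, uᵀ],[u, J_{n-1}]] and J_n⁻¹ is given by the Schur complement block formula. -/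
open Matrix

/-- Factorization of the quadratic expression `1 − (c, vᵀ) Jₙ⁻¹ (c, vᵀ)ᵀ` where
`Jₙ⁻¹` is given by the Schur-complement block formula, `v` is the reversal of `u`,
`Δ = 1 − uᵀ J⁻¹ u ≠ 0` and `D = uᵀ J⁻¹ v`. -/
theorem quadratic_factorization (n : ℕ) (J : Matrix (Fin n) (Fin n) ℝ)
    (hJ : IsUnit J.det) (hsymm : J.IsSymm)
    (hpersymm : ∀ i j : Fin n, J i j = J j.rev i.rev)
    (u v : Fin n → ℝ) (hv : ∀ i, v i = u i.rev)
    (hΔ : (1 : ℝ) - u ⬝ᵥ (J⁻¹ *ᵥ u) ≠ 0) (c : ℝ) :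
    1 - (Sum.elim (fun _ : Fin 1 => c) v) ⬝ᵥ
        ((Matrix.fromBlocks
            (Matrix.of fun _ _ => ((1 : ℝ) - u ⬝ᵥ (J⁻¹ *ᵥ u))⁻¹)
            (Matrix.replicateRow (Fin 1) (-(((1 : ℝ) - u ⬝ᵥ (J⁻¹ *ᵥ u))⁻¹) • (u ᵥ* J⁻¹)))
            (Matrix.replicateCol (Fin 1) (-(((1 : ℝ) - u ⬝ᵥ (J⁻¹ *ᵥ u))⁻¹) • (J⁻¹ *ᵥ u)))
            (J⁻¹ + ((1 : ℝ) - u ⬝ᵥ (J⁻¹ *ᵥ u))⁻¹ •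
              Matrix.of fun i j => (J⁻¹ *ᵥ u) i * (u ᵥ* J⁻¹) j))
          *ᵥ (Sum.elim (fun _ : Fin 1 => c) v))
      = (-((1 : ℝ) - u ⬝ᵥ (J⁻¹ *ᵥ u))⁻¹ * c + 1 +
            ((1 : ℝ) - u ⬝ᵥ (J⁻¹ *ᵥ u))⁻¹ * (u ⬝ᵥ (J⁻¹ *ᵥ v))) *
        (c + ((1 : ℝ) - u ⬝ᵥ (J⁻¹ *ᵥ u)) - u ⬝ᵥ (J⁻¹ *ᵥ v)) := by
  -- symmetry of J⁻¹
  have hisymm : (J⁻¹)ᵀ = J⁻¹ := by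
    rw [Matrix.transpose_nonsing_inv, hsymm.eq]
  -- vecMul = mulVec
  have hvm : u ᵥ* J⁻¹ = J⁻¹ *ᵥ u := by
    conv_lhs => rw [← hisymm, vecMul_transpose]
  -- persymmetry of J⁻¹
  have hper : ∀ i j : Fin n, J⁻¹ i j = J⁻¹ i.rev j.rev := by
    have hJs : J = (Jᵀ).submatrix (⇑(Fin.revPerm : Equiv.Perm (Fin n))) ⇑(Fin.revPerm : Equiv.Perm (Fin n)) := by
      ext i j
      simp [Matrix.submatrix_apply, ← hpersymm i j]
    intro i j
    have : J⁻¹ = ((Jᵀ)⁻¹).submatrix (⇑(Fin.revPerm : Equiv.Perm (Fin n))) ⇑(Fin.revPerm : Equiv.Perm (Fin n)) := by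
      conv_lhs => rw [hJs]
      rw [Matrix.inv_submatrix_equiv]
    rw [← Matrix.transpose_nonsing_inv, hisymm] at this
    conv_lhs => rw [this]
    rfl
  have key1 : v ⬝ᵥ (J⁻¹ *ᵥ v) = u ⬝ᵥ (J⁻¹ *ᵥ u) := by
    simp only [dotProduct, mulVec, hv]
    refine Fintype.sum_equiv Fin.revPerm _ _ fun i => ?_
    simp only [Fin.revPerm_apply, Fin.rev_rev]
    congr 1
    refine Fintype.sum_equiv Fin.revPerm _ _ fun j => ?_
    simp only [dotProduct, Fin.revPerm_apply, Fin.rev_rev]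
    rw [← hper]
  have hvm' : v ᵥ* J⁻¹ = J⁻¹ *ᵥ v := by
    conv_lhs => rw [← hisymm, vecMul_transpose]
  have key2 : v ⬝ᵥ (J⁻¹ *ᵥ u) = u ⬝ᵥ (J⁻¹ *ᵥ v) := by
    rw [Matrix.dotProduct_mulVec, hvm', dotProduct_comm]
  have hrank : ∀ w x y : Fin n → ℝ,
      (Matrix.of fun i j => w i * x j) *ᵥ y = (x ⬝ᵥ y) • w := by
    intro w x y
    ext i
    simp only [mulVec, dotProduct, Pi.smul_apply, smul_eq_mul, Matrix.of_apply,
      Finset.sum_mul]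
    exact Finset.sum_congr rfl fun j _ => by ring
  have e1 : (J⁻¹ *ᵥ u) ⬝ᵥ v = u ⬝ᵥ (J⁻¹ *ᵥ v) := by
    rw [dotProduct_comm]; exact key2
  have hof : (Matrix.of fun _ _ : Fin 1 => ((1:ℝ) - u ⬝ᵥ (J⁻¹ *ᵥ u))⁻¹) *ᵥ
      (fun _ : Fin 1 => c) = fun _ => ((1:ℝ) - u ⬝ᵥ (J⁻¹ *ᵥ u))⁻¹ * c := by
    ext i; simp [mulVec, dotProduct, Fin.sum_univ_one]
  have hcol : ∀ w : Fin n → ℝ, (Matrix.replicateCol (Fin 1) w) *ᵥ (fun _ : Fin 1 => c)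
      = c • w := by
    intro w; ext i; simp [mulVec, dotProduct, Fin.sum_univ_one, mul_comm]
  rw [fromBlocks_mulVec, sumElim_dotProduct_sumElim]
  simp only [Sum.elim_comp_inl, Sum.elim_comp_inr, Matrix.add_mulVec,
    Matrix.smul_mulVec, hrank, dotProduct_add, dotProduct_smul,
    Matrix.replicateRow_mulVec_eq_const, hvm, hvm', hof, hcol,
    smul_dotProduct, dotProduct_smul, neg_smul, neg_dotProduct,
    dotProduct_neg, smul_eq_mul, e1, key1, key2]
  have hdot1 : ∀ x y : Fin 1 → ℝ, x ⬝ᵥ y = x 0 * y 0 := fun x y => by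
    simp [dotProduct, Fin.sum_univ_one]
  simp only [hdot1, Function.const_apply, Pi.smul_apply, Pi.neg_apply,
    smul_eq_mul]
  set A := u ⬝ᵥ (J⁻¹ *ᵥ u) with hA
  set D := u ⬝ᵥ (J⁻¹ *ᵥ v) with hD
  field_simp
  ring
end

section
/- Let f, g : [0,a] → ℝ be integrable and let ℰ, ℰ^g solve ∂_t ℰ = f(t) e^{2itx} conj(ℰ), ∂_t ℰ^g = g(t) e^{2itx} conj(ℰ^g), both with initial value 1 at t = 0, for fixed x ∈ ℝ. Assume ∫₀ᵃ |g| ≤ 2∫₀ᵃ |f| =: 2F. Then |ℰ(a,x) − ℰ^g(a,x)|² ≤ 2 C e^{2F} ∫₀ᵃ |f(t) − g(t)| dt, where C = e^{2F}(e^{2F} + e^{F}). -/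
open MeasureTheory Complex Set Filter

lemma integral_swap_aux {t : ℝ} (ht : 0 ≤ t) {k h : ℝ → ℝ}
    (hk : IntegrableOn k (Icc 0 t)) (hh : IntegrableOn h (Icc 0 t)) :
    ∫ s in (0:ℝ)..t, k s * (∫ u in (0:ℝ)..s, h u)
      = ∫ u in (0:ℝ)..t, h u * (∫ s in u..t, k s) := by
  have hk' : Integrable k (volume.restrict (Ioc (0:ℝ) t)) :=
    hk.mono_set Ioc_subset_Icc_self
  have hh' : Integrable h (volume.restrict (Ioc (0:ℝ) t)) :=
    hh.mono_set Ioc_subset_Icc_self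
  set μ := volume.restrict (Ioc (0:ℝ) t) with hμ
  set F : ℝ → ℝ → ℝ := fun s u => if u ≤ s then k s * h u else 0 with hF
  have hFint : Integrable (Function.uncurry F) (μ.prod μ) := by
    have h1 : Integrable (fun z : ℝ × ℝ => k z.1 * h z.2) (μ.prod μ) :=
      hk'.mul_prod hh'
    have h2 : MeasurableSet {z : ℝ × ℝ | z.2 ≤ z.1} :=
      measurableSet_le measurable_snd measurable_fst
    have : Function.uncurry F = {z : ℝ × ℝ | z.2 ≤ z.1}.indicator
        (fun z : ℝ × ℝ => k z.1 * h z.2) := by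
      ext z
      simp only [Function.uncurry, hF, Set.indicator, mem_setOf_eq]
    rw [this]
    exact h1.indicator h2
  have key : ∫ s, (∫ u, F s u ∂μ) ∂μ = ∫ u, (∫ s, F s u ∂μ) ∂μ :=
    integral_integral_swap hFint
  -- LHS
  have lhs_eq : ∫ s in (0:ℝ)..t, k s * (∫ u in (0:ℝ)..s, h u)
      = ∫ s, (∫ u, F s u ∂μ) ∂μ := by
    rw [intervalIntegral.integral_of_le ht]
    refine setIntegral_congr_fun measurableSet_Ioc (fun s hs => ?_)
    have hs0 : 0 ≤ s := le_of_lt hs.1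
    have inner : ∫ u in (0:ℝ)..s, h u = ∫ u, (if u ≤ s then h u else 0) ∂μ := by
      rw [intervalIntegral.integral_of_le hs0]
      have : (fun u => if u ≤ s then h u else 0) = (Iic s).indicator h := by
        ext u; simp [Set.indicator, mem_Iic]
      rw [this, hμ, integral_indicator measurableSet_Iic,
        Measure.restrict_restrict measurableSet_Iic]
      congr 1
      rw [Set.Iic_inter_Ioc_of_le hs.2]
    rw [inner, ← integral_const_mul]
    congr 1
    ext u
    simp only [hF]
    split <;> simp [mul_comm]
  -- RHS
  have rhs_eq : ∫ u in (0:ℝ)..t, h u * (∫ s in u..t, k s)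
      = ∫ u, (∫ s, F s u ∂μ) ∂μ := by
    rw [intervalIntegral.integral_of_le ht]
    refine (setIntegral_congr_fun measurableSet_Ioc (fun u hu => ?_)).symm
    have inner : ∫ s, F s u ∂μ = (∫ s in u..t, k s) * h u := by
      have : (fun s => F s u) = fun s => (Ici u).indicator k s * h u := by
        ext s; simp only [hF, Set.indicator, mem_Ici]
        split <;> simp
      rw [this, integral_mul_const, hμ, integral_indicator measurableSet_Ici,
        Measure.restrict_restrict measurableSet_Ici]
      have hset : Ici u ∩ Ioc 0 t = Icc u t := by
        ext s
        simp only [mem_inter_iff, mem_Ici, mem_Ioc, mem_Icc]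
        exact ⟨fun ⟨h1, _, h3⟩ => ⟨h1, h3⟩, fun ⟨h1, h2⟩ => ⟨h1, lt_of_lt_of_le hu.1 h1, h2⟩⟩
      rw [hset, integral_Icc_eq_integral_Ioc, ← intervalIntegral.integral_of_le hu.2]
    rw [inner, mul_comm]
  rw [lhs_eq, rhs_eq, key]

set_option maxHeartbeats 2000000 in
lemma gronwall_L1 {a : ℝ} (ha : 0 ≤ a) {k φ : ℝ → ℝ}
    (hk : IntegrableOn k (Icc 0 a)) (hknn : ∀ s ∈ Icc 0 a, 0 ≤ k s)
    (hφ : ContinuousOn φ (Icc 0 a)) (hφnn : ∀ s ∈ Icc 0 a, 0 ≤ φ s)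
    {B : ℝ} (hB : 0 ≤ B)
    (h : ∀ t ∈ Icc 0 a, φ t ≤ B + ∫ s in (0:ℝ)..t, k s * φ s) :
    φ a ≤ B * Real.exp (∫ s in (0:ℝ)..a, k s) := by
  set K : ℝ → ℝ := fun t => ∫ s in (0:ℝ)..t, k s with hK
  have hksub : ∀ {t : ℝ}, t ∈ Icc 0 a → IntegrableOn k (Icc 0 t) :=
    fun {t} ht => hk.mono_set (Icc_subset_Icc le_rfl ht.2)
  have hkint : ∀ {t : ℝ}, t ∈ Icc 0 a → IntervalIntegrable k volume 0 t := by
    intro t ht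
    exact (intervalIntegrable_iff_integrableOn_Icc_of_le ht.1).2 (hksub ht)
  have hKnn : ∀ t ∈ Icc 0 a, 0 ≤ K t := by
    intro t ht
    exact intervalIntegral.integral_nonneg ht.1
      (fun u hu => hknn u ⟨hu.1, le_trans hu.2 ht.2⟩)
  have hKcont : ContinuousOn K (Icc 0 a) := by
    have := intervalIntegral.continuousOn_primitive_interval'
      (a := (0:ℝ)) (b₁ := 0) (b₂ := a) (f := k) (μ := volume)
      (hkint (right_mem_Icc.2 ha))
      (by simp [uIcc_of_le ha, ha])
    simpa [uIcc_of_le ha] using this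
  obtain ⟨c, hc, hM⟩ := (isCompact_Icc (a := (0:ℝ)) (b := a)).exists_isMaxOn
    (nonempty_Icc.2 ha) hφ
  set M := φ c with hMdef
  have hMnn : 0 ≤ M := hφnn c hc
  have hφM : ∀ s ∈ Icc 0 a, φ s ≤ M := fun s hs => hM hs
  -- integrability of k * (continuous on Icc 0 a)
  have hmul : ∀ (w : ℝ → ℝ), ContinuousOn w (Icc 0 a) → ∀ {t : ℝ}, t ∈ Icc 0 a →
      IntervalIntegrable (fun s => k s * w s) volume 0 t := by
    intro w hw t ht
    apply (intervalIntegrable_iff_integrableOn_Icc_of_le ht.1).2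
    have hsub : Icc (0:ℝ) t ⊆ Icc 0 a := Icc_subset_Icc le_rfl ht.2
    obtain ⟨Cw, hCw⟩ := (isCompact_Icc.image_of_continuousOn hw).isBounded.subset_ball 0
    have hwb : ∀ s ∈ Icc 0 t, |w s| ≤ |Cw| := by
      intro s hs
      have := hCw ⟨s, hsub hs, rfl⟩
      simp only [Metric.mem_ball, dist_zero_right, Real.norm_eq_abs] at this
      exact le_trans this.le (le_abs_self _)
    have hmeas : AEStronglyMeasurable (fun s => k s * w s) (volume.restrict (Icc 0 t)) :=
      ((hksub ht).aestronglyMeasurable).mul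
        ((hw.mono hsub).aestronglyMeasurable measurableSet_Icc)
    apply Integrable.mono' (((hksub ht).abs).const_mul |Cw|) hmeas
    filter_upwards [ae_restrict_mem measurableSet_Icc] with s hs
    rw [Real.norm_eq_abs, abs_mul, mul_comm (|Cw|) _]
    exact mul_le_mul_of_nonneg_left (hwb s hs) (abs_nonneg _)
  -- key identity
  have key : ∀ (j : ℕ), ∀ t ∈ Icc 0 a,
      (∫ s in (0:ℝ)..t, k s * (K s)^j) = (K t)^(j+1) / (j+1) := by
    intro j
    induction j with
    | zero => intro t ht; simp [hK]
    | succ j ih =>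
      intro t ht
      have hsub : Icc (0:ℝ) t ⊆ Icc 0 a := Icc_subset_Icc le_rfl ht.2
      have hjne : (j:ℝ) + 1 ≠ 0 := by positivity
      have e2 : (∫ s in (0:ℝ)..t, k s * (K s)^(j+1))
          = ((j:ℝ)+1) * ∫ s in (0:ℝ)..t, k s * (∫ u in (0:ℝ)..s, k u * (K u)^j) := by
        rw [← intervalIntegral.integral_const_mul]
        apply intervalIntegral.integral_congr
        intro s hs
        rw [uIcc_of_le ht.1] at hs
        show k s * K s ^ (j+1) = ((j:ℝ)+1) * (k s * ∫ u in (0:ℝ)..s, k u * (K u)^j)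
        rw [ih s (hsub hs)]
        field_simp
      have swap := integral_swap_aux ht.1 (k := k) (h := fun u => k u * (K u)^j)
        (hksub ht)
        ((intervalIntegrable_iff_integrableOn_Icc_of_le ht.1).1
          (hmul (fun u => (K u)^j) (hKcont.pow _) ht))
      beta_reduce at swap
      have e3 : (∫ u in (0:ℝ)..t, (k u * (K u)^j) * (∫ s in u..t, k s))
          = K t * ((K t)^(j+1)/((j:ℝ)+1)) - ∫ u in (0:ℝ)..t, k u * (K u)^(j+1) := by
        have e4 : ∀ u ∈ Icc (0:ℝ) t, (k u * (K u)^j) * (∫ s in u..t, k s)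
            = K t * (k u * (K u)^j) - k u * (K u)^(j+1) := by
          intro u hu
          have hut : u ∈ Icc (0:ℝ) a := hsub hu
          have : (∫ s in u..t, k s) = K t - K u := by
            rw [hK]
            rw [eq_sub_iff_add_eq, add_comm]
            exact intervalIntegral.integral_add_adjacent_intervals (hkint hut)
              ((hkint ht).symm.trans (hkint hut)).symm
          rw [this]; ring
        rw [intervalIntegral.integral_congr (g :=
            fun u => K t * (k u * (K u)^j) - k u * (K u)^(j+1))
            (by intro u hu; rw [uIcc_of_le ht.1] at hu; exact e4 u hu)]
        rw [intervalIntegral.integral_sub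
            ((hmul (fun u => (K u)^j) (hKcont.pow _) ht).const_mul _)
            (hmul (fun u => (K u)^(j+1)) (hKcont.pow _) ht),
          intervalIntegral.integral_const_mul, ih t ht]
      set A := ∫ s in (0:ℝ)..t, k s * (K s)^(j+1) with hAdef
      have hA : A = ((j:ℝ)+1) * (K t * ((K t)^(j+1)/((j:ℝ)+1)) - A) := by
        calc A = ((j:ℝ)+1) * ∫ s in (0:ℝ)..t, k s * (∫ u in (0:ℝ)..s, k u * (K u)^j) := e2
          _ = ((j:ℝ)+1) * ∫ u in (0:ℝ)..t, (k u * (K u)^j) * (∫ s in u..t, k s) := by rw [swap]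
          _ = ((j:ℝ)+1) * (K t * ((K t)^(j+1)/((j:ℝ)+1)) - A) := by rw [e3]
      have h1 : ((j:ℝ)+1) * (K t * ((K t)^(j+1)/((j:ℝ)+1))) = K t ^ (j+2) := by
        field_simp
        ring
      have h3 : ((j:ℝ)+2) * A = K t ^ (j+2) := by
        rw [mul_sub, h1] at hA
        linarith
      rw [show ((((j:ℕ)+1:ℕ)):ℝ) + 1 = (j:ℝ)+2 by push_cast; ring,
        eq_div_iff (by positivity : ((j:ℝ)+2) ≠ 0), show j+1+1 = j+2 from rfl, ← h3]
      ring
  -- main induction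
  have main : ∀ n : ℕ, ∀ t ∈ Icc 0 a,
      φ t ≤ B * (∑ j ∈ Finset.range n, (K t)^j / (j.factorial : ℝ))
        + M * ((K t)^n / (n.factorial : ℝ)) := by
    intro n
    induction n with
    | zero => intro t ht; simpa using hφM t ht
    | succ n ih =>
      intro t ht
      have hsub : Icc (0:ℝ) t ⊆ Icc 0 a := Icc_subset_Icc le_rfl ht.2
      have hwcont : ContinuousOn (fun s => B * (∑ j ∈ Finset.range n, (K s)^j / (j.factorial : ℝ))
          + M * ((K s)^n / (n.factorial : ℝ))) (Icc 0 a) := by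
        apply ContinuousOn.add
        · exact continuousOn_const.mul
            (continuousOn_finset_sum _ (fun j _ => (hKcont.pow j).div_const _))
        · exact continuousOn_const.mul ((hKcont.pow n).div_const _)
      have step1 : φ t ≤ B + ∫ s in (0:ℝ)..t, k s *
          (B * (∑ j ∈ Finset.range n, (K s)^j / (j.factorial : ℝ))
            + M * ((K s)^n / (n.factorial : ℝ))) := by
        refine le_trans (h t ht) (add_le_add_right ?_ B)
        apply intervalIntegral.integral_mono_on ht.1 (hmul φ hφ ht) (hmul _ hwcont ht)
        intro s hs
        exact mul_le_mul_of_nonneg_left (ih s (hsub hs)) (hknn s (hsub hs))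
      set G : ℕ → ℝ → ℝ := fun j s => B / (j.factorial : ℝ) * (k s * (K s)^j) with hG
      have hGint : ∀ j : ℕ, IntervalIntegrable (G j) volume 0 t :=
        fun j => (hmul (fun u => (K u)^j) (hKcont.pow _) ht).const_mul _
      have hGval : ∀ j : ℕ, (∫ s in (0:ℝ)..t, G j s)
          = B * ((K t)^(j+1) / ((j+1).factorial : ℝ)) := by
        intro j
        rw [hG]
        rw [intervalIntegral.integral_const_mul, key j t ht, Nat.factorial_succ]
        have : (j.factorial : ℝ) ≠ 0 := Nat.cast_ne_zero.2 j.factorial_ne_zero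
        push_cast
        rw [div_mul_div_comm, mul_div_assoc, mul_comm ((j.factorial : ℝ)) ((j:ℝ)+1)]
      have expand : (∫ s in (0:ℝ)..t, k s *
          (B * (∑ j ∈ Finset.range n, (K s)^j / (j.factorial : ℝ))
            + M * ((K s)^n / (n.factorial : ℝ))))
          = B * (∑ j ∈ Finset.range n, (K t)^(j+1) / ((j+1).factorial : ℝ))
            + M * ((K t)^(n+1) / ((n+1).factorial : ℝ)) := by
        have e1 : ∀ s ∈ Icc (0:ℝ) t, k s *
            (B * (∑ j ∈ Finset.range n, (K s)^j / (j.factorial : ℝ))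
              + M * ((K s)^n / (n.factorial : ℝ)))
            = (∑ j ∈ Finset.range n, G j s)
              + (M / (n.factorial : ℝ)) * (k s * (K s)^n) := by
          intro s hs
          rw [hG]
          rw [mul_add, Finset.mul_sum, Finset.mul_sum]
          congr 1
          · exact Finset.sum_congr rfl (fun j hj => by ring)
          · ring
        rw [intervalIntegral.integral_congr (g := fun s =>
            (∑ j ∈ Finset.range n, G j s)
              + (M / (n.factorial : ℝ)) * (k s * (K s)^n))
            (by intro s hs; rw [uIcc_of_le ht.1] at hs; exact e1 s hs)]
        have hsumint : IntervalIntegrable (fun s => ∑ j ∈ Finset.range n, G j s) volume 0 t := by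
          rw [show (fun s => ∑ j ∈ Finset.range n, G j s) = ∑ i ∈ Finset.range n, G i from by
            ext s; simp]
          exact IntervalIntegrable.sum (Finset.range n) (fun j _ => hGint j)
        have hadd := intervalIntegral.integral_add (f := fun s => ∑ j ∈ Finset.range n, G j s)
            (g := fun s => (M / (n.factorial : ℝ)) * (k s * (K s)^n))
            hsumint ((hmul (fun u => (K u)^n) (hKcont.pow _) ht).const_mul _)
        rw [hadd]
        have hfs := intervalIntegral.integral_finset_sum (μ := volume) (a := (0:ℝ)) (b := t)
            (f := fun j s => G j s) (s := Finset.range n) (fun j _ => hGint j)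
        rw [hfs]
        congr 1
        · rw [Finset.mul_sum]
          exact Finset.sum_congr rfl (fun j _ => hGval j)
        · rw [intervalIntegral.integral_const_mul, key n t ht, Nat.factorial_succ]
          have : (n.factorial : ℝ) ≠ 0 := Nat.cast_ne_zero.2 n.factorial_ne_zero
          push_cast
          rw [div_mul_div_comm, mul_div_assoc, mul_comm ((n.factorial : ℝ)) ((n:ℝ)+1)]
      rw [expand] at step1
      calc φ t ≤ B + (B * (∑ j ∈ Finset.range n, (K t)^(j+1) / ((j+1).factorial : ℝ))
            + M * ((K t)^(n+1) / ((n+1).factorial : ℝ))) := step1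
        _ = B * (∑ j ∈ Finset.range (n+1), (K t)^j / (j.factorial : ℝ))
            + M * ((K t)^(n+1) / ((n+1).factorial : ℝ)) := by
          rw [Finset.sum_range_succ' (fun j => (K t)^j / (j.factorial : ℝ)) n]
          simp [mul_add]
          ring
  -- pass to the limit
  have ha' : a ∈ Icc (0:ℝ) a := right_mem_Icc.2 ha
  have hbound : ∀ n : ℕ, φ a ≤ B * Real.exp (K a) + M * ((K a)^n / (n.factorial : ℝ)) := by
    intro n
    refine le_trans (main n a ha') (add_le_add_left ?_ _)
    exact mul_le_mul_of_nonneg_left (Real.sum_le_exp_of_nonneg (hKnn a ha') n) hB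
  have hlim : Tendsto (fun n : ℕ => B * Real.exp (K a) + M * ((K a)^n / (n.factorial : ℝ)))
      atTop (nhds (B * Real.exp (K a))) := by
    have := (FloorSemiring.tendsto_pow_div_factorial_atTop (K a)).const_mul M
    simpa using tendsto_const_nhds.add this
  exact ge_of_tendsto hlim (Eventually.of_forall hbound)

lemma integrableOn_mul_cont {a : ℝ} {p w : ℝ → ℝ}
    (hp : IntegrableOn p (Icc 0 a)) (hw : ContinuousOn w (Icc 0 a)) :
    IntegrableOn (fun s => p s * w s) (Icc 0 a) := by
  obtain ⟨Cw, hCw⟩ := (isCompact_Icc.image_of_continuousOn hw).isBounded.subset_ball 0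
  have hwb : ∀ s ∈ Icc (0:ℝ) a, |w s| ≤ |Cw| := by
    intro s hs
    have := hCw ⟨s, hs, rfl⟩
    simp only [Metric.mem_ball, dist_zero_right, Real.norm_eq_abs] at this
    exact le_trans this.le (le_abs_self _)
  have hmeas : AEStronglyMeasurable (fun s => p s * w s) (volume.restrict (Icc 0 a)) :=
    (hp.aestronglyMeasurable).mul (hw.aestronglyMeasurable measurableSet_Icc)
  apply Integrable.mono' ((hp.abs).const_mul |Cw|) hmeas
  filter_upwards [ae_restrict_mem measurableSet_Icc] with s hs
  rw [Real.norm_eq_abs, abs_mul, mul_comm (|Cw|) _]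
  exact mul_le_mul_of_nonneg_left (hwb s hs) (abs_nonneg _)

lemma endpoint_mono {a t : ℝ} (ht : t ∈ Icc 0 a) {p : ℝ → ℝ}
    (hp : IntegrableOn p (Icc 0 a)) (hpn : ∀ s, 0 ≤ p s) :
    (∫ s in (0:ℝ)..t, p s) ≤ ∫ s in (0:ℝ)..a, p s := by
  have h1 : IntervalIntegrable p volume 0 t :=
    (intervalIntegrable_iff_integrableOn_Icc_of_le ht.1).2
      (hp.mono_set (Icc_subset_Icc le_rfl ht.2))
  have h2 : IntervalIntegrable p volume t a :=
    (intervalIntegrable_iff_integrableOn_Icc_of_le ht.2).2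
      (hp.mono_set (Icc_subset_Icc ht.1 le_rfl))
  rw [← intervalIntegral.integral_add_adjacent_intervals h1 h2]
  have : 0 ≤ ∫ s in t..a, p s :=
    intervalIntegral.integral_nonneg ht.2 (fun u _ => hpn u)
  linarith

lemma normSq_hasDeriv {W : ℝ → ℂ} {w : ℂ} {t : ℝ} (hW : HasDerivAt W w t) :
    HasDerivAt (fun s => ‖W s‖^2) (2 * ((starRingEnd ℂ) (W t) * w).re) t := by
  have hre : HasDerivAt (fun s => (W s).re) w.re t :=
    Complex.reCLM.hasFDerivAt.comp_hasDerivAt t hW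
  have him : HasDerivAt (fun s => (W s).im) w.im t :=
    Complex.imCLM.hasFDerivAt.comp_hasDerivAt t hW
  have h1 := (hre.mul hre).add (him.mul him)
  have heq : (fun s => ‖W s‖^2)
      = fun s => (W s).re * (W s).re + (W s).im * (W s).im := by
    ext s
    rw [Complex.sq_norm, Complex.normSq_apply]
  rw [heq]
  refine h1.congr_deriv ?_
  simp [Complex.mul_re, Complex.conj_re, Complex.conj_im]
  ring

lemma abs_exp_two_I (s x : ℝ) : ‖Complex.exp (2 * Complex.I * s * x)‖ = 1 := by
  rw [Complex.norm_exp]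
  have : (2 * Complex.I * s * x).re = 0 := by
    simp [Complex.mul_re, Complex.mul_im]
  rw [this, Real.exp_zero]

/-- The basic a priori bound: any solution with value 1 at 0 satisfies
`‖W t‖^2 ≤ exp (2∫₀ᵗ |p|)`. -/
lemma sol_bound {a x : ℝ} (ha : 0 ≤ a) {p : ℝ → ℝ} (hp : IntegrableOn p (Icc 0 a))
    {W : ℝ → ℂ} (hW0 : W 0 = 1)
    (hW : ∀ t ∈ Icc 0 a, HasDerivAt W
      ((p t : ℂ) * Complex.exp (2 * Complex.I * t * x) * (starRingEnd ℂ) (W t)) t) :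
    ∀ t ∈ Icc 0 a, ‖W t‖^2 ≤ Real.exp (2 * ∫ s in (0:ℝ)..t, |p s|) := by
  intro t ht
  have hWc : ContinuousOn W (Icc 0 a) :=
    fun s hs => ((hW s hs).continuousAt).continuousWithinAt
  set c : ℝ → ℂ := fun s => Complex.exp (2 * Complex.I * s * x) with hc
  set φ : ℝ → ℝ := fun s => ‖W s‖^2 with hφ
  set φ' : ℝ → ℝ := fun s =>
    2 * ((starRingEnd ℂ) (W s) * ((p s : ℂ) * c s * (starRingEnd ℂ) (W s))).re with hφ'
  have hsub : Icc (0:ℝ) t ⊆ Icc 0 a := Icc_subset_Icc le_rfl ht.2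
  have hφ'eq : ∀ s, φ' s = p s * (2 * (c s * ((starRingEnd ℂ) (W s))^2).re) := by
    intro s
    have : (starRingEnd ℂ) (W s) * ((p s : ℂ) * c s * (starRingEnd ℂ) (W s))
        = (p s : ℂ) * (c s * ((starRingEnd ℂ) (W s))^2) := by ring
    rw [hφ']
    beta_reduce
    rw [this, Complex.mul_re, Complex.ofReal_re, Complex.ofReal_im]
    ring
  have hwcont : ContinuousOn (fun s => 2 * (c s * ((starRingEnd ℂ) (W s))^2).re) (Icc 0 a) := by
    apply ContinuousOn.mul continuousOn_const
    apply Complex.continuous_re.comp_continuousOn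
    exact ((Continuous.continuousOn (by fun_prop)).mul
      ((Complex.continuous_conj.comp_continuousOn hWc).pow 2))
  have hφ'int : ∀ r ∈ Icc (0:ℝ) a, IntervalIntegrable φ' volume 0 r := by
    intro r hr
    apply (intervalIntegrable_iff_integrableOn_Icc_of_le hr.1).2
    have : IntegrableOn (fun s => p s * (2 * (c s * ((starRingEnd ℂ) (W s))^2).re)) (Icc 0 a) :=
      integrableOn_mul_cont hp hwcont
    exact (this.mono_set (Icc_subset_Icc le_rfl hr.2)).congr_fun
      (fun s _ => (hφ'eq s).symm) measurableSet_Icc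
  have hftc : ∀ r ∈ Icc (0:ℝ) a, φ r = 1 + ∫ s in (0:ℝ)..r, φ' s := by
    intro r hr
    have := intervalIntegral.integral_eq_sub_of_hasDerivAt (f := φ) (f' := φ')
      (a := (0:ℝ)) (b := r) ?_ (hφ'int r hr)
    · rw [this, hφ]
      simp [hW0]
    · intro s hs
      rw [uIcc_of_le hr.1] at hs
      exact normSq_hasDeriv (hW s (Icc_subset_Icc le_rfl hr.2 hs))
  have hbound : ∀ s ∈ Icc (0:ℝ) a, φ' s ≤ 2 * |p s| * φ s := by
    intro s hs
    have h1 : ((starRingEnd ℂ) (W s) * ((p s : ℂ) * c s * (starRingEnd ℂ) (W s))).re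
        ≤ |p s| * ‖W s‖^2 := by
      refine le_trans (Complex.re_le_norm _) ?_
      rw [norm_mul, norm_mul, norm_mul, Complex.norm_conj, Complex.norm_real, Real.norm_eq_abs]
      simp only [hc]
      rw [abs_exp_two_I]
      exact le_of_eq (by ring)
    calc φ' s ≤ 2 * (|p s| * ‖W s‖^2) := by
          rw [hφ']; beta_reduce; linarith
      _ = 2 * |p s| * φ s := by rw [hφ]; ring
  -- apply gronwall on [0, t]
  have happ := gronwall_L1 (a := t) ht.1 (k := fun s => 2 * |p s|) (φ := φ)
    (((hp.mono_set (Icc_subset_Icc le_rfl ht.2)).abs).const_mul 2)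
    (fun s _ => by positivity)
    ((hWc.mono hsub).norm.pow 2)
    (fun s _ => by rw [hφ]; positivity)
    (B := 1) zero_le_one ?_
  · rw [one_mul] at happ
    refine le_trans happ ?_
    rw [intervalIntegral.integral_const_mul]
  · intro r hr
    have hr' : r ∈ Icc (0:ℝ) a := hsub hr
    rw [hftc r hr']
    apply add_le_add_right
    apply intervalIntegral.integral_mono_on hr.1 (hφ'int r hr')
    · exact (intervalIntegrable_iff_integrableOn_Icc_of_le hr.1).2
        ((integrableOn_mul_cont (((hp.mono_set (Icc_subset_Icc le_rfl hr'.2))).abs.const_mul 2)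
          (((hWc.mono (Icc_subset_Icc le_rfl hr'.2)).norm.pow 2))).congr_fun
            (fun s _ => rfl) measurableSet_Icc)
    · intro s hs
      exact hbound s (Icc_subset_Icc le_rfl hr'.2 hs)

/-- Stability of the scattering function under perturbation of the potential:
if `ℰ` and `ℰᵍ` solve the scattering ODE with potentials `f` and `g`, both equal
to `1` at `t = 0`, and `∫₀ᵃ|g| ≤ 2∫₀ᵃ|f| = 2F`, then
`|ℰ(a,x) − ℰᵍ(a,x)|² ≤ 2 C e^{2F} ∫₀ᵃ |f − g|` with `C = e^{2F}(e^{2F} + e^F)`. -/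
theorem scattering_stability (a x : ℝ) (ha : 0 ≤ a) (f g : ℝ → ℝ)
    (hf : IntegrableOn f (Set.Icc 0 a)) (hg : IntegrableOn g (Set.Icc 0 a))
    (hgf : (∫ s in (0 : ℝ)..a, |g s|) ≤ 2 * ∫ s in (0 : ℝ)..a, |f s|)
    (E Eg : ℝ → ℂ) (hE0 : E 0 = 1) (hEg0 : Eg 0 = 1)
    (hE : ∀ t ∈ Set.Icc 0 a, HasDerivAt E
      ((f t : ℂ) * Complex.exp (2 * Complex.I * t * x) * (starRingEnd ℂ) (E t)) t)
    (hEg : ∀ t ∈ Set.Icc 0 a, HasDerivAt Eg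
      ((g t : ℂ) * Complex.exp (2 * Complex.I * t * x) * (starRingEnd ℂ) (Eg t)) t) :
    ‖E a - Eg a‖ ^ 2 ≤
      2 * (Real.exp (2 * ∫ s in (0 : ℝ)..a, |f s|) *
          (Real.exp (2 * ∫ s in (0 : ℝ)..a, |f s|) +
            Real.exp (∫ s in (0 : ℝ)..a, |f s|))) *
        Real.exp (2 * ∫ s in (0 : ℝ)..a, |f s|) *
        ∫ s in (0 : ℝ)..a, |f s - g s| := by
  set F : ℝ := ∫ s in (0 : ℝ)..a, |f s| with hF
  have hFnn : 0 ≤ F :=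
    intervalIntegral.integral_nonneg ha (fun u _ => abs_nonneg _)
  have hEc : ContinuousOn E (Set.Icc 0 a) :=
    fun s hs => ((hE s hs).continuousAt).continuousWithinAt
  have hEgc : ContinuousOn Eg (Set.Icc 0 a) :=
    fun s hs => ((hEg s hs).continuousAt).continuousWithinAt
  -- a priori bounds
  have hEbd : ∀ t ∈ Set.Icc 0 a, ‖E t‖ ≤ Real.exp F := by
    intro t ht
    have h2 := sol_bound ha hf hE0 hE t ht
    have h3 : (∫ s in (0:ℝ)..t, |f s|) ≤ F := endpoint_mono ht hf.abs (fun s => abs_nonneg _)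
    have h4 : ‖E t‖^2 ≤ (Real.exp F)^2 := by
      refine le_trans h2 ?_
      rw [← Real.exp_nat_mul]
      apply Real.exp_le_exp.2
      push_cast
      linarith
    have := Real.sqrt_le_sqrt h4
    rwa [Real.sqrt_sq (norm_nonneg _), Real.sqrt_sq (Real.exp_nonneg _)] at this
  have hEgbd : ∀ t ∈ Set.Icc 0 a, ‖Eg t‖ ≤ Real.exp (2*F) := by
    intro t ht
    have h2 := sol_bound ha hg hEg0 hEg t ht
    have h3 : (∫ s in (0:ℝ)..t, |g s|) ≤ 2*F := by
      refine le_trans (endpoint_mono ht hg.abs (fun s => abs_nonneg _)) hgf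
    have h4 : ‖Eg t‖^2 ≤ (Real.exp (2*F))^2 := by
      refine le_trans h2 ?_
      rw [← Real.exp_nat_mul]
      apply Real.exp_le_exp.2
      push_cast
      linarith
    have := Real.sqrt_le_sqrt h4
    rwa [Real.sqrt_sq (norm_nonneg _), Real.sqrt_sq (Real.exp_nonneg _)] at this
  have hDbd : ∀ t ∈ Set.Icc 0 a, ‖E t - Eg t‖ ≤ Real.exp F + Real.exp (2*F) :=
    fun t ht => le_trans (norm_sub_le _ _) (add_le_add (hEbd t ht) (hEgbd t ht))
  set c : ℝ → ℂ := fun s => Complex.exp (2 * Complex.I * s * x) with hc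
  set φ : ℝ → ℝ := fun s => ‖E s - Eg s‖^2 with hφdef
  set φ' : ℝ → ℝ := fun s => 2 * ((starRingEnd ℂ) (E s - Eg s) *
      ((f s : ℂ) * c s * (starRingEnd ℂ) (E s) - (g s : ℂ) * c s * (starRingEnd ℂ) (Eg s))).re
    with hφ'def
  have hderiv : ∀ s ∈ Set.Icc 0 a, HasDerivAt φ (φ' s) s :=
    fun s hs => normSq_hasDeriv ((hE s hs).sub (hEg s hs))
  have hφc : ContinuousOn φ (Set.Icc 0 a) := ((hEc.sub hEgc).norm.pow 2)
  -- decomposition of φ'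
  have hz : ∀ s : ℝ, (starRingEnd ℂ) (E s - Eg s) *
      ((f s : ℂ) * c s * (starRingEnd ℂ) (E s) - (g s : ℂ) * c s * (starRingEnd ℂ) (Eg s))
      = ((f s : ℝ) : ℂ) * (c s * ((starRingEnd ℂ) (E s - Eg s))^2)
        + ((f s - g s : ℝ) : ℂ) * (c s * (starRingEnd ℂ) (E s - Eg s) * (starRingEnd ℂ) (Eg s)) := by
    intro s
    rw [map_sub]
    push_cast
    ring
  set w1 : ℝ → ℝ := fun s => 2 * (c s * ((starRingEnd ℂ) (E s - Eg s))^2).re with hw1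
  set w2 : ℝ → ℝ := fun s => 2 * (c s * (starRingEnd ℂ) (E s - Eg s) * (starRingEnd ℂ) (Eg s)).re
    with hw2
  have hφ'eq : ∀ s : ℝ, φ' s = f s * w1 s + (f s - g s) * w2 s := by
    intro s
    rw [hφ'def, hw1, hw2]
    beta_reduce
    rw [hz s]
    simp only [Complex.add_re, Complex.mul_re, Complex.mul_im,
      Complex.ofReal_re, Complex.ofReal_im]
    ring
  have hw1c : ContinuousOn w1 (Set.Icc 0 a) := by
    apply ContinuousOn.mul continuousOn_const
    apply Complex.continuous_re.comp_continuousOn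
    exact (Continuous.continuousOn (by fun_prop)).mul
      ((Complex.continuous_conj.comp_continuousOn (hEc.sub hEgc)).pow 2)
  have hw2c : ContinuousOn w2 (Set.Icc 0 a) := by
    apply ContinuousOn.mul continuousOn_const
    apply Complex.continuous_re.comp_continuousOn
    exact ((Continuous.continuousOn (by fun_prop)).mul
      (Complex.continuous_conj.comp_continuousOn (hEc.sub hEgc))).mul
      (Complex.continuous_conj.comp_continuousOn hEgc)
  have hφ'int : ∀ r ∈ Set.Icc (0:ℝ) a, IntervalIntegrable φ' volume 0 r := by
    intro r hr
    apply (intervalIntegrable_iff_integrableOn_Icc_of_le hr.1).2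
    have h1 : IntegrableOn (fun s => f s * w1 s + (f s - g s) * w2 s) (Set.Icc 0 a) :=
      (integrableOn_mul_cont hf hw1c).add (integrableOn_mul_cont (hf.sub hg) hw2c)
    exact ((h1.mono_set (Set.Icc_subset_Icc le_rfl hr.2)).congr_fun
      (fun s _ => (hφ'eq s).symm) measurableSet_Icc)
  have hftc : ∀ r ∈ Set.Icc (0:ℝ) a, φ r = ∫ s in (0:ℝ)..r, φ' s := by
    intro r hr
    have := intervalIntegral.integral_eq_sub_of_hasDerivAt (f := φ) (f' := φ')
      (a := (0:ℝ)) (b := r) ?_ (hφ'int r hr)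
    · rw [this, hφdef]
      simp [hE0, hEg0]
    · intro s hs
      rw [uIcc_of_le hr.1] at hs
      exact hderiv s (Set.Icc_subset_Icc le_rfl hr.2 hs)
  -- pointwise bound on φ'
  set Cc : ℝ := 2 * ((Real.exp F + Real.exp (2*F)) * Real.exp (2*F)) with hCc
  have hCcnn : 0 ≤ Cc := by positivity
  have hw1b : ∀ s ∈ Set.Icc (0:ℝ) a, |w1 s| ≤ 2 * φ s := by
    intro s hs
    rw [hw1]
    beta_reduce
    rw [abs_mul, _root_.abs_two]
    apply mul_le_mul_of_nonneg_left ?_ (by norm_num : (0:ℝ) ≤ 2)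
    refine le_trans (Complex.abs_re_le_norm _) ?_
    rw [norm_mul, norm_pow, Complex.norm_conj]
    simp only [hc]
    rw [abs_exp_two_I, one_mul, hφdef]
  have hw2b : ∀ s ∈ Set.Icc (0:ℝ) a, |w2 s| ≤ Cc := by
    intro s hs
    rw [hw2, hCc]
    beta_reduce
    rw [abs_mul, _root_.abs_two]
    apply mul_le_mul_of_nonneg_left ?_ (by norm_num : (0:ℝ) ≤ 2)
    refine le_trans (Complex.abs_re_le_norm _) ?_
    rw [norm_mul, norm_mul, Complex.norm_conj, Complex.norm_conj]
    simp only [hc]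
    rw [abs_exp_two_I, one_mul]
    exact mul_le_mul (hDbd s hs) (hEgbd s hs) (norm_nonneg _)
      (by positivity)
  have hbound : ∀ s ∈ Set.Icc (0:ℝ) a, φ' s ≤ 2 * |f s| * φ s + Cc * |f s - g s| := by
    intro s hs
    rw [hφ'eq s]
    have hφnn : 0 ≤ φ s := by rw [hφdef]; positivity
    have b1 : f s * w1 s ≤ 2 * |f s| * φ s :=
      calc f s * w1 s ≤ |f s * w1 s| := le_abs_self _
        _ = |f s| * |w1 s| := abs_mul _ _
        _ ≤ |f s| * (2 * φ s) := mul_le_mul_of_nonneg_left (hw1b s hs) (abs_nonneg _)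
        _ = 2 * |f s| * φ s := by ring
    have b2 : (f s - g s) * w2 s ≤ Cc * |f s - g s| :=
      calc (f s - g s) * w2 s ≤ |(f s - g s) * w2 s| := le_abs_self _
        _ = |f s - g s| * |w2 s| := abs_mul _ _
        _ ≤ |f s - g s| * Cc := mul_le_mul_of_nonneg_left (hw2b s hs) (abs_nonneg _)
        _ = Cc * |f s - g s| := mul_comm _ _
    linarith
  set I1 : ℝ := ∫ s in (0:ℝ)..a, |f s - g s| with hI1
  have hI1nn : 0 ≤ I1 :=
    intervalIntegral.integral_nonneg ha (fun u _ => abs_nonneg _)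
  have hineq : ∀ t ∈ Set.Icc (0:ℝ) a, φ t ≤ Cc * I1 + ∫ s in (0:ℝ)..t, (2 * |f s|) * φ s := by
    intro t ht
    have hsub : Set.Icc (0:ℝ) t ⊆ Set.Icc 0 a := Set.Icc_subset_Icc le_rfl ht.2
    have int1 : IntervalIntegrable (fun s => 2 * |f s| * φ s) volume 0 t :=
      (intervalIntegrable_iff_integrableOn_Icc_of_le ht.1).2
        ((integrableOn_mul_cont ((hf.abs).const_mul 2) hφc).mono_set hsub)
    have int2 : IntervalIntegrable (fun s => Cc * |f s - g s|) volume 0 t := by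
      apply (intervalIntegrable_iff_integrableOn_Icc_of_le ht.1).2
      have h9 : IntegrableOn (fun s => Cc * |f s - g s|) (Set.Icc 0 a) :=
        ((hf.sub hg).abs).const_mul Cc
      exact h9.mono_set hsub
    rw [hftc t ht]
    calc (∫ s in (0:ℝ)..t, φ' s)
        ≤ ∫ s in (0:ℝ)..t, (2 * |f s| * φ s + Cc * |f s - g s|) := by
          apply intervalIntegral.integral_mono_on ht.1 (hφ'int t ht) (int1.add int2)
          exact fun s hs => hbound s (hsub hs)
      _ = (∫ s in (0:ℝ)..t, 2 * |f s| * φ s) + Cc * ∫ s in (0:ℝ)..t, |f s - g s| := by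
          rw [intervalIntegral.integral_add int1 int2, intervalIntegral.integral_const_mul]
      _ ≤ (∫ s in (0:ℝ)..t, 2 * |f s| * φ s) + Cc * I1 := by
          apply add_le_add_right
          exact mul_le_mul_of_nonneg_left
            (endpoint_mono ht (hf.sub hg).abs (fun s => abs_nonneg _)) hCcnn
      _ = Cc * I1 + ∫ s in (0:ℝ)..t, (2 * |f s|) * φ s := by
          rw [add_comm]
  have happ := gronwall_L1 ha (k := fun s => 2 * |f s|) (φ := φ)
    ((hf.abs).const_mul 2) (fun s _ => by positivity) hφc
    (fun s _ => by rw [hφdef]; positivity)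
    (B := Cc * I1) (mul_nonneg hCcnn hI1nn) hineq
  rw [intervalIntegral.integral_const_mul] at happ
  calc ‖E a - Eg a‖^2 = φ a := rfl
    _ ≤ Cc * I1 * Real.exp (2 * ∫ s in (0:ℝ)..a, |f s|) := happ
    _ = 2 * (Real.exp (2*F) * (Real.exp (2*F) + Real.exp F)) * Real.exp (2*F) * I1 := by
        rw [hCc, ← hF]
        ring
end

section
/- Let μ be a positive measure on ℝ with period 2π (μ(S + 2π) = μ(S)) that is locally finite and has locally infinite support. Then for every d > 0 there exists δ > 0 such that every interval I ⊂ ℝ with |I| sufficiently large intersects at least d|I| pairwise disjoint intervals J with μ(J) > δ and |J| > δ. -/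
open MeasureTheory

set_option maxHeartbeats 2000000 in
/-- A `2π`-periodic locally finite positive measure on `ℝ` with locally infinite
support satisfies the second Paley–Wiener sampling condition: for every `d > 0`
there is `δ > 0` such that every sufficiently long interval `[a,b]` intersects at
least `d(b − a)` pairwise disjoint `(μ,δ)`-intervals. -/
theorem periodic_measure_sampling_condition
    (μ : Measure ℝ) [IsLocallyFiniteMeasure μ]
    (hper : μ.map (fun x => x + 2 * Real.pi) = μ)
    (hsupp : ∃ C > 0, (Set.Icc (-C) C ∩
      {x : ℝ | ∀ ε > 0, 0 < μ (Set.Ioo (x - ε) (x + ε))}).Infinite) :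
    ∀ d > 0, ∃ δ > 0, ∃ L > 0, ∀ a b : ℝ, L ≤ b - a →
      ∃ (k : ℕ) (c e : Fin k → ℝ),
        d * (b - a) ≤ (k : ℝ) ∧
        (∀ i, δ < (μ (Set.Ioo (c i) (e i))).toReal ∧ δ < e i - c i ∧
          (Set.Ioo (c i) (e i) ∩ Set.Icc a b).Nonempty) ∧
        Pairwise fun i j => Disjoint (Set.Ioo (c i) (e i)) (Set.Ioo (c j) (e j)) := by
  intro d hd
  obtain ⟨C, hC, hinf⟩ := hsupp
  have hπ := Real.pi_pos
  set P : Set ℝ := {x : ℝ | ∀ ε > 0, 0 < μ (Set.Ioo (x - ε) (x + ε))} with hPdef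
  -- periodicity of the measure of intervals
  have key : ∀ c e : ℝ, μ (Set.Ioo (c + 2*Real.pi) (e + 2*Real.pi)) = μ (Set.Ioo c e) := by
    intro c e
    conv_lhs => rw [← hper]
    rw [Measure.map_apply (measurable_add_const _) measurableSet_Ioo]
    congr 1
    ext z
    simp only [Set.mem_preimage, Set.mem_Ioo]
    constructor <;> rintro ⟨h1, h2⟩ <;> constructor <;> linarith
  have shift : ∀ (n : ℤ) (c e : ℝ),
      μ (Set.Ioo (c + 2*Real.pi*n) (e + 2*Real.pi*n)) = μ (Set.Ioo c e) := by
    intro n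
    induction n using Int.induction_on with
    | zero => intro c e; simp
    | succ n ih =>
        intro c e
        have e1 : c + 2*Real.pi*((n:ℤ)+1 : ℤ) = (c + 2*Real.pi*((n:ℤ):ℝ)) + 2*Real.pi := by
          push_cast; ring
        have e2 : e + 2*Real.pi*((n:ℤ)+1 : ℤ) = (e + 2*Real.pi*((n:ℤ):ℝ)) + 2*Real.pi := by
          push_cast; ring
        rw [e1, e2, key, ih]
    | pred n ih =>
        intro c e
        have h1 := key (c + 2*Real.pi*((-(n:ℤ)-1 : ℤ):ℝ)) (e + 2*Real.pi*((-(n:ℤ)-1 : ℤ):ℝ))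
        have e1 : c + 2*Real.pi*((-(n:ℤ)-1 : ℤ):ℝ) + 2*Real.pi = c + 2*Real.pi*((-(n:ℤ) : ℤ):ℝ) := by
          push_cast; ring
        have e2 : e + 2*Real.pi*((-(n:ℤ)-1 : ℤ):ℝ) + 2*Real.pi = e + 2*Real.pi*((-(n:ℤ) : ℤ):ℝ) := by
          push_cast; ring
        rw [e1, e2, ih] at h1
        rw [← h1]
  -- find a window of length π containing infinitely many support points
  obtain ⟨t, hT⟩ : ∃ t : ℝ, (Set.Icc t (t + Real.pi) ∩ P).Infinite := by
    by_contra hcon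
    push_neg at hcon
    set M : ℕ := ⌈2*C/Real.pi⌉₊ + 1 with hM
    have hsub : Set.Icc (-C) C ∩ P ⊆
        ⋃ j ∈ Finset.range M, (Set.Icc (-C + j*Real.pi) (-C + j*Real.pi + Real.pi) ∩ P) := by
      rintro y ⟨hy, hyP⟩
      have hy0 : 0 ≤ (y + C)/Real.pi := div_nonneg (by linarith [hy.1]) hπ.le
      set j : ℕ := ⌊(y + C)/Real.pi⌋₊ with hj
      have hj1 : (j:ℝ) * Real.pi ≤ y + C := by
        have h := Nat.floor_le hy0
        have : ((y+C)/Real.pi)*Real.pi = y + C := by field_simp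
        nlinarith
      have hj2 : y + C < ((j:ℝ)+1)*Real.pi := by
        have h := Nat.lt_floor_add_one ((y + C)/Real.pi)
        have : ((y+C)/Real.pi)*Real.pi = y + C := by field_simp
        nlinarith
      have hjM : j ∈ Finset.range M := by
        refine Finset.mem_range.mpr ?_
        have h1 : (j:ℝ) ≤ 2*C/Real.pi := by
          rw [le_div_iff₀ hπ]; nlinarith [hy.2]
        have h2 : (j:ℝ) ≤ (⌈2*C/Real.pi⌉₊ : ℝ) := le_trans h1 (Nat.le_ceil _)
        have h3 : j ≤ ⌈2*C/Real.pi⌉₊ := by exact_mod_cast h2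
        omega
      exact Set.mem_biUnion hjM ⟨⟨by linarith, by nlinarith⟩, hyP⟩
    exact hinf (Set.Finite.subset (Set.Finite.biUnion (Finset.range M).finite_toSet
      (fun j _ => hcon _)) hsub)
  set C' : ℝ := |t| + Real.pi with hC'
  have hC'pos : 0 < C' := by
    have := abs_nonneg t; rw [hC']; linarith
  set N : ℕ := ⌈4*Real.pi*d⌉₊ + 2 with hN
  have hN2 : 2 ≤ N := Nat.le_add_left 2 _
  have hNd : 4*Real.pi*d ≤ (N:ℝ) := by
    have h1 := Nat.le_ceil (4*Real.pi*d)
    have h2 : ((⌈4*Real.pi*d⌉₊ : ℕ) : ℝ) ≤ (N:ℝ) := by exact_mod_cast Nat.le_add_right _ 2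
    linarith
  -- pick N support points in the window
  obtain ⟨x, hxinj, hxmem⟩ : ∃ x : Fin N → ℝ, Function.Injective x ∧
      ∀ i, x i ∈ Set.Icc t (t + Real.pi) ∩ P := by
    have f : ℕ ↪ (Set.Icc t (t + Real.pi) ∩ P : Set ℝ) := Set.Infinite.natEmbedding _ hT
    refine ⟨fun i => (f (i:ℕ) : ℝ), ?_, fun i => (f (i:ℕ)).2⟩
    intro i j h
    exact Fin.ext (f.injective (Subtype.ext h))
  have hxrange : ∀ i, t ≤ x i ∧ x i ≤ t + Real.pi := fun i => ⟨(hxmem i).1.1, (hxmem i).1.2⟩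
  have hxP : ∀ i, x i ∈ P := fun i => (hxmem i).2
  -- minimal gap and ε
  have hDne : (Finset.univ.offDiag : Finset (Fin N × Fin N)).Nonempty := by
    refine ⟨(⟨0, by omega⟩, ⟨1, by omega⟩),
      Finset.mem_offDiag.mpr ⟨Finset.mem_univ _, Finset.mem_univ _, ?_⟩⟩
    simp [Fin.ext_iff]
  set ε₀ : ℝ := Finset.inf' _ hDne (fun q : Fin N × Fin N => |x q.1 - x q.2|) with hε₀
  have hε₀pos : 0 < ε₀ := by
    rw [hε₀, Finset.lt_inf'_iff]
    rintro ⟨i, j⟩ hij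
    rw [Finset.mem_offDiag] at hij
    exact abs_pos.mpr (sub_ne_zero.mpr (fun h => hij.2.2 (hxinj h)))
  set ε : ℝ := min (min ε₀ Real.pi) 2 / 4 with hεdef
  have hε : 0 < ε := by
    apply div_pos (lt_min (lt_min hε₀pos hπ) (by norm_num)) (by norm_num)
  have hεmin1 : min (min ε₀ Real.pi) 2 ≤ ε₀ :=
    le_trans (min_le_left _ _) (min_le_left _ _)
  have hεmin2 : min (min ε₀ Real.pi) 2 ≤ Real.pi :=
    le_trans (min_le_left _ _) (min_le_right _ _)
  have hεmin3 : min (min ε₀ Real.pi) 2 ≤ 2 := min_le_right _ _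
  have hεπ : ε ≤ Real.pi/4 := by rw [hεdef]; linarith
  have hε1 : ε ≤ 1 := by rw [hεdef]; linarith
  have hεε₀ : 4*ε ≤ ε₀ := by rw [hεdef]; linarith
  -- measures of the base intervals
  have hμpos : ∀ i, 0 < μ (Set.Ioo (x i - ε) (x i + ε)) := fun i => hxP i ε hε
  have hμfin : ∀ i, μ (Set.Ioo (x i - ε) (x i + ε)) < ⊤ := fun i =>
    lt_of_le_of_lt (measure_mono Set.Ioo_subset_Icc_self) (isCompact_Icc.measure_lt_top)
  have hμtoReal : ∀ i, 0 < (μ (Set.Ioo (x i - ε) (x i + ε))).toReal := fun i =>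
    ENNReal.toReal_pos (hμpos i).ne' (hμfin i).ne
  -- δ
  have hune : (Finset.univ : Finset (Fin N)).Nonempty := ⟨⟨0, by omega⟩, Finset.mem_univ _⟩
  set m₀ : ℝ := Finset.inf' Finset.univ hune
      (fun i => (μ (Set.Ioo (x i - ε) (x i + ε))).toReal) with hm₀
  have hm₀pos : 0 < m₀ := by
    rw [hm₀, Finset.lt_inf'_iff]
    exact fun i _ => hμtoReal i
  set δ : ℝ := min (2*ε) m₀ / 2 with hδdef
  have hδpos : 0 < δ := div_pos (lt_min (by linarith) hm₀pos) (by norm_num)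
  have hδ2ε : δ < 2*ε := by
    have := min_le_left (2*ε) m₀; rw [hδdef]; linarith
  have hδμ : ∀ i, δ < (μ (Set.Ioo (x i - ε) (x i + ε))).toReal := by
    intro i
    have h1 : m₀ ≤ (μ (Set.Ioo (x i - ε) (x i + ε))).toReal := by
      rw [hm₀]; exact Finset.inf'_le _ (Finset.mem_univ i)
    have h2 := min_le_right (2*ε) m₀
    have := hμtoReal i
    rw [hδdef]; linarith
  set L : ℝ := 2*(2*C' + 2 + 4*Real.pi) with hL
  have hLpos : 0 < L := by rw [hL]; linarith
  refine ⟨δ, hδpos, L, hLpos, ?_⟩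
  intro a b hab
  have hba : 0 < b - a := lt_of_lt_of_le hLpos hab
  set j₀ : ℤ := ⌈(a + C' + 1)/(2*Real.pi)⌉ with hj₀
  have hj₀1 : a + C' + 1 ≤ 2*Real.pi*(j₀:ℝ) := by
    have h := Int.le_ceil ((a + C' + 1)/(2*Real.pi))
    rw [div_le_iff₀ (by linarith)] at h
    rw [hj₀]; linarith
  have hj₀2 : 2*Real.pi*(j₀:ℝ) < a + C' + 1 + 2*Real.pi := by
    have h := Int.ceil_lt_add_one ((a + C' + 1)/(2*Real.pi))
    have h2 : ((a + C' + 1)/(2*Real.pi))*(2*Real.pi) = a + C' + 1 := by field_simp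
    rw [hj₀]; nlinarith
  set m : ℕ := ⌊((b - a) - (2*C' + 2 + 2*Real.pi))/(2*Real.pi)⌋₊ with hm
  have harg0 : 0 ≤ ((b - a) - (2*C' + 2 + 2*Real.pi))/(2*Real.pi) := by
    apply div_nonneg _ (by linarith)
    rw [hL] at hab; linarith
  have hm1 : (m:ℝ)*(2*Real.pi) ≤ (b - a) - (2*C' + 2 + 2*Real.pi) := by
    have h := Nat.floor_le harg0
    have h2 : (((b - a) - (2*C' + 2 + 2*Real.pi))/(2*Real.pi))*(2*Real.pi)
        = (b - a) - (2*C' + 2 + 2*Real.pi) := by field_simp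
    rw [hm]; nlinarith
  have hm2 : (b - a)/(4*Real.pi) ≤ (m:ℝ) := by
    have h1 : ((b - a) - (2*C' + 2 + 2*Real.pi))/(2*Real.pi) - 1 < (m:ℝ) := by
      rw [hm]; exact Nat.sub_one_lt_floor _
    have h1' : (b - a) - (2*C' + 2 + 2*Real.pi) < ((m:ℝ)+1)*(2*Real.pi) := by
      have h2 := (div_lt_iff₀ (by linarith : (0:ℝ) < 2*Real.pi)).mp (by linarith : ((b - a) - (2*C' + 2 + 2*Real.pi))/(2*Real.pi) < (m:ℝ)+1)
      linarith
    rw [div_le_iff₀ (by linarith : (0:ℝ) < 4*Real.pi)]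
    rw [hL] at hab
    nlinarith
  have hmpos : 0 < m := by
    rcases Nat.eq_zero_or_pos m with h | h
    · exfalso
      rw [h] at hm2
      simp only [Nat.cast_zero] at hm2
      have : 0 < (b-a)/(4*Real.pi) := div_pos hba (by linarith)
      linarith
    · exact h
  -- the intervals
  set Pi_ : Fin (N*m) → Fin N := fun i => ⟨(i:ℕ)/m,
    (Nat.div_lt_iff_lt_mul hmpos).mpr (by simpa [Nat.mul_comm] using i.2)⟩ with hPi_
  set Q : Fin (N*m) → ℕ := fun i => (i:ℕ) % m with hQdef
  set ctr : Fin (N*m) → ℝ := fun i => x (Pi_ i) + 2*Real.pi*((j₀ + (Q i : ℤ) : ℤ) : ℝ) with hctr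
  have hctr' : ∀ i, ctr i = x (Pi_ i) + 2*Real.pi*((j₀:ℝ) + (Q i:ℝ)) := by
    intro i; rw [hctr]; push_cast; ring
  refine ⟨N*m, fun i => ctr i - ε, fun i => ctr i + ε, ?_, ?_, ?_⟩
  · -- counting
    have h1 : (4*Real.pi*d) * ((b-a)/(4*Real.pi)) ≤ (N:ℝ)*(m:ℝ) :=
      mul_le_mul hNd hm2 (div_nonneg hba.le (by linarith)) (Nat.cast_nonneg N)
    have h2 : (4*Real.pi*d) * ((b-a)/(4*Real.pi)) = d*(b-a) := by
      field_simp
    rw [Nat.cast_mul]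
    linarith
  · intro i
    have hmeas : μ (Set.Ioo (ctr i - ε) (ctr i + ε))
        = μ (Set.Ioo (x (Pi_ i) - ε) (x (Pi_ i) + ε)) := by
      have h := shift (j₀ + (Q i : ℤ)) (x (Pi_ i) - ε) (x (Pi_ i) + ε)
      rw [← h]
      congr 2 <;> rw [hctr] <;> ring
    have hxb := hxrange (Pi_ i)
    have habs1 : -C' ≤ x (Pi_ i) := by
      have := neg_abs_le t; rw [hC']; linarith [hxb.1, hπ]
    have habs2 : x (Pi_ i) ≤ C' := by
      have := le_abs_self t; rw [hC']; linarith [hxb.2]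
    have hqm : (Q i:ℝ) + 1 ≤ (m:ℝ) := by
      exact_mod_cast (Nat.mod_lt _ hmpos : (i:ℕ) % m < m)
    have hq0 : (0:ℝ) ≤ (Q i:ℝ) := Nat.cast_nonneg _
    have h2πq : 0 ≤ 2*Real.pi*(Q i:ℝ) := by positivity
    have h2πq' : 2*Real.pi*(Q i:ℝ) ≤ 2*Real.pi*((m:ℝ)-1) := by nlinarith
    have hmem1 : a ≤ ctr i := by
      rw [hctr' i]; nlinarith
    have hmem2 : ctr i ≤ b := by
      rw [hctr' i]; nlinarith
    refine ⟨by rw [hmeas]; exact hδμ _, ?_, ⟨ctr i, ?_, hmem1, hmem2⟩⟩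
    · show δ < ctr i + ε - (ctr i - ε); linarith
    · show ctr i ∈ Set.Ioo (ctr i - ε) (ctr i + ε)
      exact Set.mem_Ioo.mpr ⟨by linarith, by linarith⟩
  · intro i j hij
    have hdisj : ∀ y y' : ℝ, 2*ε ≤ |y - y'| →
        Disjoint (Set.Ioo (y-ε) (y+ε)) (Set.Ioo (y'-ε) (y'+ε)) := by
      intro y y' h
      rcases le_total y y' with h' | h'
      · rw [abs_of_nonpos (by linarith)] at h
        exact Set.disjoint_left.mpr fun z hz hz' => by
          have := hz.2; have := hz'.1; simp only [Set.mem_Ioo] at *; linarith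
      · rw [abs_of_nonneg (by linarith)] at h
        exact Set.disjoint_left.mpr fun z hz hz' => by
          have := hz.1; have := hz'.2; simp only [Set.mem_Ioo] at *; linarith
    apply hdisj
    by_cases hQij : Q i = Q j
    · -- same residue, distinct support point
      have hPne : Pi_ i ≠ Pi_ j := by
        intro h
        apply hij
        apply Fin.ext
        have h1 := Nat.div_add_mod (i:ℕ) m
        have h2 := Nat.div_add_mod (j:ℕ) m
        have h3 : (i:ℕ)/m = (j:ℕ)/m := by
          have h' := congrArg Fin.val h
          simpa [hPi_] using h'
        have h4 : (i:ℕ) % m = (j:ℕ) % m := hQij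
        conv_lhs => rw [← Nat.div_add_mod (i:ℕ) m]
        conv_rhs => rw [← Nat.div_add_mod (j:ℕ) m]
        rw [h3, h4]
      have hpair : ((Pi_ i, Pi_ j)) ∈ (Finset.univ.offDiag : Finset (Fin N × Fin N)) :=
        Finset.mem_offDiag.mpr ⟨Finset.mem_univ _, Finset.mem_univ _, hPne⟩
      have hle : ε₀ ≤ |x (Pi_ i) - x (Pi_ j)| := by
        rw [hε₀]; exact Finset.inf'_le _ hpair
      have hceq : ctr i - ctr j = x (Pi_ i) - x (Pi_ j) := by
        rw [hctr' i, hctr' j, hQij]; ring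
      rw [hceq]; linarith
    · -- distinct residues
      have hq1 : (1:ℝ) ≤ |(Q i:ℝ) - (Q j:ℝ)| := by
        rcases lt_or_gt_of_ne hQij with h | h
        · have h1 : (Q i:ℝ) + 1 ≤ (Q j:ℝ) := by exact_mod_cast h
          rw [abs_of_nonpos (by linarith)]; linarith
        · have h1 : (Q j:ℝ) + 1 ≤ (Q i:ℝ) := by exact_mod_cast h
          rw [abs_of_nonneg (by linarith)]; linarith
      have hxd : |x (Pi_ i) - x (Pi_ j)| ≤ Real.pi := by
        have h1 := hxrange (Pi_ i)
        have h2 := hxrange (Pi_ j)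
        rw [abs_le]
        constructor <;> linarith [h1.1, h1.2, h2.1, h2.2]
      have hceq : ctr i - ctr j
          = (x (Pi_ i) - x (Pi_ j)) + 2*Real.pi*((Q i:ℝ) - (Q j:ℝ)) := by
        rw [hctr' i, hctr' j]; ring
      have h1 : |2*Real.pi*((Q i:ℝ) - (Q j:ℝ))|
          ≤ |ctr i - ctr j| + |x (Pi_ i) - x (Pi_ j)| := by
        have e1 : 2*Real.pi*((Q i:ℝ) - (Q j:ℝ))
            = (ctr i - ctr j) - (x (Pi_ i) - x (Pi_ j)) := by rw [hceq]; ring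
        rw [e1]
        exact abs_sub _ _
      have h2 : 2*Real.pi ≤ |2*Real.pi*((Q i:ℝ) - (Q j:ℝ))| := by
        rw [abs_mul, abs_of_pos (by linarith : (0:ℝ) < 2*Real.pi)]
        nlinarith
      linarith
end
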